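/- Let N be a prime number and ∅ ≠ u ⊆ {1,…,s}. Define ē²_u(N) := (1/N²) ∑_{k=0}^{N-1} ∑_{k'=0}^{N-1} (X_{N;k,k'} + J_{N;k,k'})^{|u|}, with X and J as below. Then ē²_u(N) ≤ c_u/N + (1/N) ∑_{κ=1}^{N-1} |J_{N;κ,1}|^{|u|}, where c_u := 2/3^{|u|} + 1/4^{|u|}. -/

import Mathlib

open Finset Real Filter

/-- The Bernoulli polynomial of degree 2, `B₂(t) = t² - t + 1/6`. -/
noncomputable def B2 (t : ℝ) : ℝ := t ^ 2 - t + 1 / 6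

/-- `X_{N;k,k'} = (1/(2(N-1))) ∑_{z=1}^{N-1} B₂({(k-k')z/N})`. -/
noncomputable def Xq (N k k' : ℕ) : ℝ :=
  (1 / (2 * ((N : ℝ) - 1))) *
    ∑ z ∈ Finset.Icc 1 (N - 1), B2 (Int.fract ((((k : ℝ) - (k' : ℝ)) * z) / N))

/-- `J_{N;k,k'} = (1/(N-1)) ∑_{z=1}^{N-1} ({kz/N} - 1/2)({k'z/N} - 1/2)`. -/
noncomputable def Jq (N k k' : ℕ) : ℝ :=
  (1 / ((N : ℝ) - 1)) *
    ∑ z ∈ Finset.Icc 1 (N - 1),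
      (Int.fract ((k : ℝ) * z / N) - 1 / 2) * (Int.fract ((k' : ℝ) * z / N) - 1 / 2)

/- ### Auxiliary numeric lemmas -/

lemma myaux1 : ∀ n, 6 ≤ n → 2 * 7^n ≤ 8^n := by
  intro n hn
  induction n, hn using Nat.le_induction with
  | base => norm_num
  | succ k hk ih =>
      calc 2 * 7^(k+1) = 7 * (2 * 7^k) := by ring
        _ ≤ 7 * 8^k := Nat.mul_le_mul_left 7 ih
        _ ≤ 8 * 8^k := Nat.mul_le_mul_right _ (by norm_num)
        _ = 8^(k+1) := by ring

lemma myaux2 (n : ℕ) : (2*n+2) * 7^n ≤ 7 * 8^n := by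
  rcases lt_or_ge n 7 with h | h
  · interval_cases n <;> norm_num
  · induction n, h using Nat.le_induction with
    | base => norm_num
    | succ k hk ih =>
        have h1 : 7 * ((2*k+2) * 7^k) ≤ 7 * (7 * 8^k) := Nat.mul_le_mul_left 7 ih
        have h2 : 7 * (2 * 7^k) ≤ 7 * 8^k := Nat.mul_le_mul_left 7 (myaux1 k (by omega))
        calc (2*(k+1)+2) * 7^(k+1) = 7 * ((2*k+2) * 7^k) + 7 * (2 * 7^k) := by ring
          _ ≤ 7 * (7 * 8^k) + 7 * 8^k := Nat.add_le_add h1 h2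
          _ = 7 * 8^(k+1) := by ring

lemma key_real (n : ℕ) : ((n:ℝ)+1) * 7^n * 2 ≤ 7 * 8^n := by
  have h := myaux2 n
  have h' : (((2*n+2) * 7^n : ℕ) : ℝ) ≤ ((7 * 8^n : ℕ) : ℝ) := Nat.cast_le.mpr h
  push_cast at h'
  linarith

lemma pow_le_of_abs_le' {x y : ℝ} (h : |x| ≤ y) (m : ℕ) : x^m ≤ y^m := by
  calc x^m ≤ |x^m| := le_abs_self _
    _ = |x|^m := abs_pow x m
    _ ≤ y^m := pow_le_pow_left₀ (abs_nonneg x) h m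

lemma add_pow_le' {a b c : ℝ} (ha : 0 ≤ a) (hb : 0 ≤ b) (h : a + b ≤ c) (n : ℕ) :
    (a+b)^(n+1) ≤ a^(n+1) + ((n:ℝ)+1)*b*c^n := by
  have hc : 0 ≤ c := le_trans (by positivity) h
  induction n with
  | zero => simp
  | succ k ih =>
      push_cast
      have hab : 0 ≤ a + b := by positivity
      have h1 : (a+b)^(k+2) ≤ (a+b) * (a^(k+1) + ((k:ℝ)+1)*b*c^k) := by
        calc (a+b)^(k+2) = (a+b) * (a+b)^(k+1) := by ring
          _ ≤ (a+b) * (a^(k+1) + ((k:ℝ)+1)*b*c^k) := by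
              apply mul_le_mul_of_nonneg_left ih hab
      have h2 : a^(k+1) ≤ c^(k+1) := pow_le_pow_left₀ ha (le_trans (by linarith) h) _
      have h3 : (a+b) * (((k:ℝ)+1)*b*c^k) ≤ c * (((k:ℝ)+1)*b*c^k) := by
        apply mul_le_mul_of_nonneg_right h
        positivity
      calc (a+b)^(k+2) ≤ (a+b) * (a^(k+1) + ((k:ℝ)+1)*b*c^k) := h1
        _ = a^(k+2) + b * a^(k+1) + (a+b) * (((k:ℝ)+1)*b*c^k) := by ring
        _ ≤ a^(k+2) + b * c^(k+1) + c * (((k:ℝ)+1)*b*c^k) := by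
            have := mul_le_mul_of_nonneg_left h2 hb
            linarith
        _ = a^(k+1+1) + ((k:ℝ)+1+1)*b*c^(k+1) := by ring

/- ### fract lemmas -/

lemma fract_int_div {N : ℕ} (hN : 0 < N) (a : ℤ) :
    Int.fract ((a : ℝ) / N) = ((a % (N:ℤ) : ℤ) : ℝ) / N := by
  have hNR : (0:ℝ) < N := by exact_mod_cast hN
  have hNZ : ((N:ℤ)) ≠ 0 := by exact_mod_cast hN.ne'
  have hr0 : (0:ℤ) ≤ a % N := Int.emod_nonneg a hNZ
  have hrN : a % (N:ℤ) < N := Int.emod_lt_of_pos a (by exact_mod_cast hN)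
  have hc : (a:ℝ) = (N:ℝ) * ((a / (N:ℤ) : ℤ):ℝ) + ((a % (N:ℤ) : ℤ):ℝ) := by
    exact_mod_cast (Int.mul_ediv_add_emod a N).symm
  rw [hc, add_div, mul_div_cancel_left₀ _ hNR.ne', Int.fract_intCast_add,
    Int.fract_eq_self.mpr ⟨by positivity, by rw [div_lt_one hNR]; exact_mod_cast hrN⟩]

lemma fract_nat_div {N : ℕ} (hN : 0 < N) (a : ℕ) :
    Int.fract ((a : ℝ) / N) = ((a % N : ℕ) : ℝ) / N := by
  have h := fract_int_div hN (a : ℤ)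
  rw [← Int.natCast_mod] at h
  push_cast at h
  exact h

/- ### Gauss sums over ℝ -/

lemma sum_range_cast (n : ℕ) : ∑ z ∈ range n, (z:ℝ) = n*((n:ℝ)-1)/2 := by
  induction n with
  | zero => simp
  | succ k ih => rw [Finset.sum_range_succ, ih]; push_cast; ring

lemma sum_range_sq_cast (n : ℕ) : ∑ z ∈ range n, (z:ℝ)^2 = n*((n:ℝ)-1)*(2*n-1)/6 := by
  induction n with
  | zero => simp
  | succ k ih => rw [Finset.sum_range_succ, ih]; push_cast; ring

lemma Icc_eq_erase {N : ℕ} : Finset.Icc 1 (N-1) = (range N).erase 0 := by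
  ext x; simp [Finset.mem_Icc, Finset.mem_erase, Finset.mem_range]; omega

lemma sum_Icc_B2 {N : ℕ} (hN : 2 ≤ N) :
    ∑ z ∈ Finset.Icc 1 (N-1), B2 ((z:ℝ)/N) = -(((N:ℝ)-1)/(6*N)) := by
  have hNR : (0:ℝ) < N := by positivity
  have h0 : (0:ℕ) ∈ range N := by simp; omega
  have key : B2 ((0:ℕ)/(N:ℝ)) + ∑ z ∈ (range N).erase 0, B2 ((z:ℝ)/N)
      = ∑ z ∈ range N, B2 ((z:ℝ)/N) := Finset.add_sum_erase _ (fun z : ℕ => B2 ((z:ℝ)/N)) h0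
  have hrange : ∑ z ∈ range N, B2 ((z:ℝ)/N) = 1/(6*N) := by
    simp only [B2, div_pow]
    rw [Finset.sum_add_distrib, Finset.sum_sub_distrib, ← Finset.sum_div, ← Finset.sum_div,
      Finset.sum_const, Finset.card_range, sum_range_cast, sum_range_sq_cast]
    field_simp
    ring
  rw [Icc_eq_erase]
  have hB0 : B2 ((0:ℕ)/(N:ℝ)) = 1/6 := by simp [B2]
  rw [hB0] at key
  rw [← key] at hrange
  field_simp at hrange ⊢
  linarith

lemma sum_Icc_id {N : ℕ} (hN : 2 ≤ N) :
    ∑ z ∈ Finset.Icc 1 (N-1), ((z:ℝ)/N) = ((N:ℝ)-1)/2 := by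
  have hNR : (0:ℝ) < N := by positivity
  rw [Icc_eq_erase]
  have h0 : (0:ℕ) ∈ range N := by simp; omega
  rw [← Finset.sum_div]
  have key : ((0:ℕ):ℝ) + ∑ z ∈ (range N).erase 0, (z:ℝ)
      = ∑ z ∈ range N, (z:ℝ) := Finset.add_sum_erase _ (fun z : ℕ => (z:ℝ)) h0
  rw [sum_range_cast] at key
  simp only [Nat.cast_zero, zero_add] at key
  rw [key]
  field_simp

/- ### ZMod transfer -/

lemma mem_Icc_cast_ne {N k : ℕ} (hN : 2 ≤ N) (hk : k ∈ Finset.Icc 1 (N-1)) :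
    (k : ZMod N) ≠ 0 := by
  haveI : NeZero N := ⟨by omega⟩
  simp only [Finset.mem_Icc] at hk
  intro h
  rw [ZMod.natCast_eq_zero_iff] at h
  have := Nat.le_of_dvd (by omega) h
  omega

lemma val_mem_Icc {N : ℕ} (hN : 2 ≤ N) {x : ZMod N} (hx : x ≠ 0) :
    x.val ∈ Finset.Icc 1 (N-1) := by
  haveI : NeZero N := ⟨by omega⟩
  simp only [Finset.mem_Icc]
  have h1 : x.val < N := ZMod.val_lt x
  have h2 : x.val ≠ 0 := fun h => hx ((ZMod.val_eq_zero x).mp h)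
  omega

lemma sum_Icc_zmod {N : ℕ} [NeZero N] (hN : 2 ≤ N) (g : ZMod N → ℝ) :
    ∑ z ∈ Finset.Icc 1 (N-1), g (z : ZMod N)
      = ∑ x ∈ (Finset.univ : Finset (ZMod N)).erase 0, g x := by
  haveI : NeZero N := ⟨by omega⟩
  refine Finset.sum_nbij' (fun z : ℕ => (z : ZMod N)) (fun x : ZMod N => x.val)
    ?_ ?_ ?_ ?_ ?_
  · intro z hz
    exact Finset.mem_erase.mpr ⟨mem_Icc_cast_ne hN hz, Finset.mem_univ _⟩
  · intro x hx
    exact val_mem_Icc hN (Finset.mem_erase.mp hx).1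
  · intro z hz
    simp only [Finset.mem_Icc] at hz
    exact ZMod.val_cast_of_lt (by omega)
  · intro x hx
    exact ZMod.natCast_zmod_val x
  · intro z hz; rfl

lemma sum_erase_mul {N : ℕ} [NeZero N] (hp : N.Prime) {c : ZMod N} (hc : c ≠ 0) (g : ZMod N → ℝ) :
    ∑ x ∈ (Finset.univ : Finset (ZMod N)).erase 0, g (c * x)
      = ∑ x ∈ (Finset.univ : Finset (ZMod N)).erase 0, g x := by
  haveI : Fact N.Prime := ⟨hp⟩
  refine Finset.sum_nbij' (fun x : ZMod N => c * x) (fun x : ZMod N => c⁻¹ * x)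
    ?_ ?_ ?_ ?_ ?_
  · intro x hx
    exact Finset.mem_erase.mpr ⟨mul_ne_zero hc (Finset.mem_erase.mp hx).1, Finset.mem_univ _⟩
  · intro x hx
    exact Finset.mem_erase.mpr
      ⟨mul_ne_zero (inv_ne_zero hc) (Finset.mem_erase.mp hx).1, Finset.mem_univ _⟩
  · intro x hx; exact inv_mul_cancel_left₀ hc x
  · intro x hx; exact mul_inv_cancel_left₀ hc x
  · intro x hx; rfl

/- ### bridges -/

lemma fract_bridge_nat {N : ℕ} [NeZero N] (k z : ℕ) :
    Int.fract ((k:ℝ) * z / N) = (((k : ZMod N) * (z : ZMod N)).val : ℝ) / N := by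
  have hN : 0 < N := Nat.pos_of_ne_zero (NeZero.ne N)
  have h1 : (k:ℝ) * z = ((k*z : ℕ) : ℝ) := by push_cast; ring
  rw [h1, fract_nat_div hN]
  congr 1
  have h2 : ((k : ZMod N) * (z : ZMod N)) = ((k*z : ℕ) : ZMod N) := by push_cast; ring
  rw [h2, ZMod.val_natCast]

lemma fract_bridge_int {N : ℕ} [NeZero N] (k k' z : ℕ) :
    Int.fract (((k:ℝ) - (k':ℝ)) * z / N)
      = (((((k : ZMod N) - (k' : ZMod N)) * (z : ZMod N)).val : ℝ)) / N := by
  have hN : 0 < N := Nat.pos_of_ne_zero (NeZero.ne N)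
  have h1 : ((k:ℝ) - k') * z = ((((k:ℤ) - k') * z : ℤ) : ℝ) := by push_cast; ring
  rw [h1, fract_int_div hN]
  congr 1
  have h2 : ((((k:ℤ) - k') * z : ℤ) % (N:ℤ)) = (((((k:ℤ)-(k':ℤ))*(z:ℤ) : ℤ) : ZMod N).val : ℤ) :=
    (ZMod.val_intCast _).symm
  rw [h2]
  have h3 : (((((k:ℤ)-(k':ℤ))*(z:ℤ) : ℤ)) : ZMod N) = ((k : ZMod N) - (k' : ZMod N)) * (z : ZMod N) := by
    push_cast; ring
  rw [h3]
  norm_cast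

/- ### evaluations -/

lemma cast_sub_one {N : ℕ} (hN : 2 ≤ N) : ((N - 1 : ℕ) : ℝ) = (N:ℝ) - 1 := by
  rw [Nat.cast_sub (by omega)]; norm_num

lemma Xq_diag {N : ℕ} (hN : 2 ≤ N) (k : ℕ) : Xq N k k = 1/12 := by
  have hN1 : ((N:ℝ) - 1) ≠ 0 := by
    have : (2:ℝ) ≤ (N:ℝ) := by exact_mod_cast hN
    linarith
  rw [Xq]
  have hterm : ∀ z ∈ Finset.Icc 1 (N-1),
      B2 (Int.fract (((k:ℝ) - (k:ℝ))*z/N)) = 1/6 := by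
    intro z hz; simp [B2]
  rw [Finset.sum_congr rfl hterm, Finset.sum_const, Nat.card_Icc, Nat.add_sub_cancel,
    nsmul_eq_mul, cast_sub_one hN]
  field_simp
  ring

lemma Xq_off {N : ℕ} (hp : N.Prime) {k k' : ℕ} (h : (k : ZMod N) ≠ (k' : ZMod N)) :
    Xq N k k' = -(1/(12*N)) := by
  haveI : NeZero N := ⟨hp.pos.ne'⟩
  have hN2 : 2 ≤ N := hp.two_le
  set d : ZMod N := (k : ZMod N) - (k' : ZMod N) with hd
  have hdne : d ≠ 0 := sub_ne_zero.mpr h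
  have hsum : ∑ z ∈ Finset.Icc 1 (N-1), B2 (Int.fract (((k:ℝ)-(k':ℝ))*z/N))
      = ∑ z ∈ Finset.Icc 1 (N-1), B2 ((z:ℝ)/N) := by
    calc ∑ z ∈ Finset.Icc 1 (N-1), B2 (Int.fract (((k:ℝ)-(k':ℝ))*z/N))
        = ∑ z ∈ Finset.Icc 1 (N-1), B2 (((d * (z:ZMod N)).val : ℝ)/N) :=
          Finset.sum_congr rfl fun z _ => by rw [fract_bridge_int]
      _ = ∑ x ∈ (Finset.univ : Finset (ZMod N)).erase 0, B2 (((d*x).val : ℝ)/N) :=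
          sum_Icc_zmod hN2 (fun x => B2 (((d*x).val:ℝ)/N))
      _ = ∑ x ∈ (Finset.univ : Finset (ZMod N)).erase 0, B2 ((x.val : ℝ)/N) :=
          sum_erase_mul hp hdne (fun x => B2 ((x.val:ℝ)/N))
      _ = ∑ z ∈ Finset.Icc 1 (N-1), B2 ((((z:ZMod N)).val : ℝ)/N) :=
          (sum_Icc_zmod hN2 _).symm
      _ = ∑ z ∈ Finset.Icc 1 (N-1), B2 ((z:ℝ)/N) := by
          refine Finset.sum_congr rfl fun z hz => ?_
          simp only [Finset.mem_Icc] at hz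
          rw [ZMod.val_cast_of_lt (by omega)]
  rw [Xq, hsum, sum_Icc_B2 hN2]
  have hNR : (0:ℝ) < (N:ℝ) := by positivity
  have hN1 : ((N:ℝ) - 1) ≠ 0 := by
    have : (2:ℝ) ≤ (N:ℝ) := by exact_mod_cast hN2
    linarith
  field_simp
  ring

lemma Jq_comm {N k k' : ℕ} : Jq N k k' = Jq N k' k := by
  rw [Jq, Jq]
  congr 1
  exact Finset.sum_congr rfl fun z _ => mul_comm _ _

lemma Jq_zero_zero {N : ℕ} (hN : 2 ≤ N) : Jq N 0 0 = 1/4 := by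
  have hN1 : ((N:ℝ) - 1) ≠ 0 := by
    have : (2:ℝ) ≤ (N:ℝ) := by exact_mod_cast hN
    linarith
  rw [Jq]
  have hterm : ∀ z ∈ Finset.Icc 1 (N-1),
      (Int.fract (((0:ℕ):ℝ)*z/N) - 1/2) * (Int.fract (((0:ℕ):ℝ)*z/N) - 1/2) = 1/4 := by
    intro z hz; norm_num
  rw [Finset.sum_congr rfl hterm, Finset.sum_const, Nat.card_Icc, Nat.add_sub_cancel,
    nsmul_eq_mul, cast_sub_one hN]
  field_simp

lemma sum_fract_Icc {N : ℕ} (hp : N.Prime) {k' : ℕ} (h : (k' : ZMod N) ≠ 0) :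
    ∑ z ∈ Finset.Icc 1 (N-1), Int.fract ((k':ℝ)*z/N) = ((N:ℝ)-1)/2 := by
  haveI : NeZero N := ⟨hp.pos.ne'⟩
  have hN2 : 2 ≤ N := hp.two_le
  calc ∑ z ∈ Finset.Icc 1 (N-1), Int.fract ((k':ℝ)*z/N)
      = ∑ z ∈ Finset.Icc 1 (N-1), ((((k':ZMod N)*(z:ZMod N)).val:ℝ)/N) :=
        Finset.sum_congr rfl fun z _ => fract_bridge_nat k' z
    _ = ∑ x ∈ (Finset.univ : Finset (ZMod N)).erase 0, ((((k':ZMod N)*x).val:ℝ)/N) :=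
        sum_Icc_zmod hN2 (fun x => (((k':ZMod N)*x).val:ℝ)/N)
    _ = ∑ x ∈ (Finset.univ : Finset (ZMod N)).erase 0, ((x.val:ℝ)/N) :=
        sum_erase_mul hp h (fun x => ((x.val:ℝ)/N))
    _ = ∑ z ∈ Finset.Icc 1 (N-1), ((((z:ZMod N)).val:ℝ)/N) := (sum_Icc_zmod hN2 _).symm
    _ = ∑ z ∈ Finset.Icc 1 (N-1), ((z:ℝ)/N) := by
        refine Finset.sum_congr rfl fun z hz => ?_
        simp only [Finset.mem_Icc] at hz
        rw [ZMod.val_cast_of_lt (by omega)]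
    _ = ((N:ℝ)-1)/2 := sum_Icc_id hN2

lemma Jq_zero_left {N : ℕ} (hp : N.Prime) {k' : ℕ} (h : (k' : ZMod N) ≠ 0) :
    Jq N 0 k' = 0 := by
  have hN2 : 2 ≤ N := hp.two_le
  rw [Jq]
  have hterm : ∀ z ∈ Finset.Icc 1 (N-1),
      (Int.fract (((0:ℕ):ℝ)*z/N) - 1/2) * (Int.fract ((k':ℝ)*z/N) - 1/2)
        = (-(1/2)) * (Int.fract ((k':ℝ)*z/N) - 1/2) := by
    intro z hz; norm_num
  rw [Finset.sum_congr rfl hterm, ← Finset.mul_sum, Finset.sum_sub_distrib,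
    sum_fract_Icc hp h, Finset.sum_const, Nat.card_Icc, Nat.add_sub_cancel, nsmul_eq_mul,
    cast_sub_one hN2]
  ring

lemma abs_Jq_le {N : ℕ} (hN : 2 ≤ N) (k k' : ℕ) : |Jq N k k'| ≤ 1/4 := by
  have hN1 : (0:ℝ) < (N:ℝ) - 1 := by
    have : (2:ℝ) ≤ (N:ℝ) := by exact_mod_cast hN
    linarith
  rw [Jq, abs_mul, abs_of_pos (show (0:ℝ) < 1/((N:ℝ)-1) by positivity)]
  have hb : |∑ z ∈ Finset.Icc 1 (N-1),
      (Int.fract ((k:ℝ)*z/N) - 1/2) * (Int.fract ((k':ℝ)*z/N) - 1/2)| ≤ ((N:ℝ)-1) * (1/4) := by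
    calc |∑ z ∈ Finset.Icc 1 (N-1),
        (Int.fract ((k:ℝ)*z/N) - 1/2) * (Int.fract ((k':ℝ)*z/N) - 1/2)|
        ≤ ∑ z ∈ Finset.Icc 1 (N-1),
            |(Int.fract ((k:ℝ)*z/N) - 1/2) * (Int.fract ((k':ℝ)*z/N) - 1/2)| :=
          Finset.abs_sum_le_sum_abs _ _
      _ ≤ ∑ z ∈ Finset.Icc 1 (N-1), (1/4 : ℝ) := by
          refine Finset.sum_le_sum fun z hz => ?_
          rw [abs_mul]
          have e1 : |Int.fract ((k:ℝ)*z/N) - 1/2| ≤ 1/2 := by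
            have h1 := Int.fract_nonneg ((k:ℝ)*z/N)
            have h2 := Int.fract_lt_one ((k:ℝ)*z/N)
            rw [abs_le]; constructor <;> linarith
          have e2 : |Int.fract ((k':ℝ)*z/N) - 1/2| ≤ 1/2 := by
            have h1 := Int.fract_nonneg ((k':ℝ)*z/N)
            have h2 := Int.fract_lt_one ((k':ℝ)*z/N)
            rw [abs_le]; constructor <;> linarith
          calc |Int.fract ((k:ℝ)*z/N) - 1/2| * |Int.fract ((k':ℝ)*z/N) - 1/2|
              ≤ (1/2) * (1/2) := mul_le_mul e1 e2 (abs_nonneg _) (by norm_num)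
            _ = 1/4 := by norm_num
      _ = ((N:ℝ)-1) * (1/4) := by
          rw [Finset.sum_const, Nat.card_Icc, Nat.add_sub_cancel, nsmul_eq_mul, cast_sub_one hN]
  calc (1/((N:ℝ)-1)) * |∑ z ∈ Finset.Icc 1 (N-1),
      (Int.fract ((k:ℝ)*z/N) - 1/2) * (Int.fract ((k':ℝ)*z/N) - 1/2)|
      ≤ (1/((N:ℝ)-1)) * (((N:ℝ)-1)*(1/4)) := by
        apply mul_le_mul_of_nonneg_left hb (by positivity)
    _ = 1/4 := by field_simp

lemma Jq_zmod {N : ℕ} [NeZero N] (hN : 2 ≤ N) (k k' : ℕ) :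
    Jq N k k' = (1/((N:ℝ)-1)) * ∑ x ∈ (Finset.univ : Finset (ZMod N)).erase 0,
      ((((k:ZMod N)*x).val : ℝ)/N - 1/2) * ((((k':ZMod N)*x).val : ℝ)/N - 1/2) := by
  rw [Jq]
  congr 1
  calc ∑ z ∈ Finset.Icc 1 (N-1),
      (Int.fract ((k:ℝ)*z/N) - 1/2) * (Int.fract ((k':ℝ)*z/N) - 1/2)
      = ∑ z ∈ Finset.Icc 1 (N-1),
          ((((k:ZMod N)*(z:ZMod N)).val : ℝ)/N - 1/2) * ((((k':ZMod N)*(z:ZMod N)).val : ℝ)/N - 1/2) :=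
        Finset.sum_congr rfl fun z _ => by rw [fract_bridge_nat, fract_bridge_nat]
    _ = _ := sum_Icc_zmod hN
        (fun x => ((((k:ZMod N)*x).val : ℝ)/N - 1/2) * ((((k':ZMod N)*x).val : ℝ)/N - 1/2))

lemma Jq_shift {N : ℕ} (hp : N.Prime) {k k' : ℕ} (hk' : (k' : ZMod N) ≠ 0) :
    Jq N k k' = Jq N ((k : ZMod N) * (k' : ZMod N)⁻¹).val 1 := by
  haveI : NeZero N := ⟨hp.pos.ne'⟩
  haveI : Fact N.Prime := ⟨hp⟩
  have hN2 : 2 ≤ N := hp.two_le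
  rw [Jq_zmod hN2, Jq_zmod hN2]
  congr 1
  rw [ZMod.natCast_zmod_val, Nat.cast_one]
  rw [← sum_erase_mul hp hk'
    (fun x => (((((k:ZMod N)*(k':ZMod N)⁻¹)*x).val : ℝ)/N - 1/2)*((((1:ZMod N)*x).val:ℝ)/N - 1/2))]
  refine Finset.sum_congr rfl fun x hx => ?_
  simp only [mul_assoc, inv_mul_cancel_left₀ hk', one_mul]

lemma inner_reindex {N : ℕ} (hp : N.Prime) (m : ℕ) {k : ℕ} (hk : k ∈ Finset.Icc 1 (N-1)) :
    ∑ k' ∈ Finset.Icc 1 (N-1), (Xq N k k' + Jq N k k')^m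
      = ∑ κ ∈ Finset.Icc 1 (N-1),
          ((if κ = 1 then (1/12:ℝ) else -(1/(12*(N:ℝ)))) + Jq N κ 1)^m := by
  haveI : NeZero N := ⟨hp.pos.ne'⟩
  haveI : Fact N.Prime := ⟨hp⟩
  haveI : Fact (1 < N) := ⟨hp.one_lt⟩
  have hN2 : 2 ≤ N := hp.two_le
  have hkne : (k:ZMod N) ≠ 0 := mem_Icc_cast_ne hN2 hk
  refine Finset.sum_nbij' (fun k' : ℕ => ((k:ZMod N) * ((k':ZMod N))⁻¹).val)
    (fun κ : ℕ => ((k:ZMod N) * ((κ:ZMod N))⁻¹).val) ?_ ?_ ?_ ?_ ?_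
  · intro k' hk'
    exact val_mem_Icc hN2 (mul_ne_zero hkne (inv_ne_zero (mem_Icc_cast_ne hN2 hk')))
  · intro κ hκ
    exact val_mem_Icc hN2 (mul_ne_zero hkne (inv_ne_zero (mem_Icc_cast_ne hN2 hκ)))
  · intro k' hk'
    have h1 : ((((k:ZMod N) * ((k':ZMod N))⁻¹).val : ℕ) : ZMod N)
        = (k:ZMod N) * ((k':ZMod N))⁻¹ := ZMod.natCast_zmod_val _
    rw [h1]
    have h2 : (k:ZMod N) * ((k:ZMod N) * ((k':ZMod N))⁻¹)⁻¹ = (k':ZMod N) := by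
      rw [mul_inv, inv_inv, ← mul_assoc, mul_inv_cancel₀ hkne, one_mul]
    rw [h2]
    simp only [Finset.mem_Icc] at hk'
    exact ZMod.val_cast_of_lt (by omega)
  · intro κ hκ
    have h1 : ((((k:ZMod N) * ((κ:ZMod N))⁻¹).val : ℕ) : ZMod N)
        = (k:ZMod N) * ((κ:ZMod N))⁻¹ := ZMod.natCast_zmod_val _
    rw [h1]
    have h2 : (k:ZMod N) * ((k:ZMod N) * ((κ:ZMod N))⁻¹)⁻¹ = (κ:ZMod N) := by
      rw [mul_inv, inv_inv, ← mul_assoc, mul_inv_cancel₀ hkne, one_mul]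
    rw [h2]
    simp only [Finset.mem_Icc] at hκ
    exact ZMod.val_cast_of_lt (by omega)
  · intro k' hk'
    have hk'ne : (k':ZMod N) ≠ 0 := mem_Icc_cast_ne hN2 hk'
    have hJ : Jq N k k' = Jq N ((k:ZMod N) * ((k':ZMod N))⁻¹).val 1 := Jq_shift hp hk'ne
    simp only [Finset.mem_Icc] at hk hk'
    by_cases hcase : (k:ZMod N) = (k':ZMod N)
    · have hkk' : k = k' := by
        have e1 := ZMod.val_cast_of_lt (show k < N by omega)
        have e2 := ZMod.val_cast_of_lt (show k' < N by omega)
        rw [← e1, ← e2, hcase]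
      have hval : ((k:ZMod N) * ((k':ZMod N))⁻¹).val = 1 := by
        rw [← hkk', mul_inv_cancel₀ hkne, ZMod.val_one]
      rw [hval, if_pos rfl, hJ, hval, hkk', Xq_diag hN2]
    · have hval : ((k:ZMod N) * ((k':ZMod N))⁻¹).val ≠ 1 := by
        intro he
        apply hcase
        have : ((k:ZMod N) * ((k':ZMod N))⁻¹) = 1 := by
          rw [← ZMod.natCast_zmod_val ((k:ZMod N) * ((k':ZMod N))⁻¹), he, Nat.cast_one]
        rw [mul_inv_eq_one₀ hk'ne] at this
        exact this
      rw [hJ, if_neg hval, Xq_off hp hcase]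

/-- `ē²_u(N) ≤ c_u/N + (1/N) ∑_{κ=1}^{N-1} |J_{N;κ,1}|^{|u|}`
with `c_u = 2/3^{|u|} + 1/4^{|u|}`. -/
theorem avg_e2u_le_Jkappa (N s : ℕ) (hN : N.Prime) (u : Finset ℕ)
    (hus : u ⊆ Finset.Icc 1 s) (hu : u.Nonempty) :
    (1 / (N : ℝ) ^ 2) *
        ∑ k ∈ Finset.range N, ∑ k' ∈ Finset.range N, (Xq N k k' + Jq N k k') ^ u.card
      ≤ (2 / (3 : ℝ) ^ u.card + 1 / (4 : ℝ) ^ u.card) / N +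
        (1 / (N : ℝ)) * ∑ κ ∈ Finset.Icc 1 (N - 1), |Jq N κ 1| ^ u.card := by
  haveI : NeZero N := ⟨hN.pos.ne'⟩
  have hN2 : 2 ≤ N := hN.two_le
  have hNR2 : (2:ℝ) ≤ (N:ℝ) := by exact_mod_cast hN2
  have hNR : (0:ℝ) < (N:ℝ) := by linarith
  obtain ⟨n, hn⟩ : ∃ n, u.card = n + 1 := ⟨u.card - 1, by have := hu.card_pos; omega⟩
  set m := u.card with hm
  set T : ℝ := ∑ κ ∈ Finset.Icc 1 (N-1), |Jq N κ 1| ^ m with hT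
  have hT0 : 0 ≤ T := Finset.sum_nonneg fun κ _ => pow_nonneg (abs_nonneg _) _
  set E : ℝ := ((n:ℝ)+1) * (1/(12*(N:ℝ))) * (7/24)^n with hE
  have hE0 : 0 ≤ E := by rw [hE]; positivity
  have hsplit : ∀ F : ℕ → ℝ, ∑ k ∈ Finset.range N, F k = F 0 + ∑ k ∈ Finset.Icc 1 (N-1), F k := by
    intro F
    rw [Icc_eq_erase]
    exact (Finset.add_sum_erase _ F (Finset.mem_range.mpr (by omega))).symm
  have hR : ((N - 1 : ℕ) : ℝ) = (N:ℝ) - 1 := cast_sub_one hN2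
  -- pieces
  have h00 : (Xq N 0 0 + Jq N 0 0)^m = (1/3:ℝ)^m := by
    rw [Xq_diag hN2, Jq_zero_zero hN2]; norm_num
  have h0k : ∀ k' ∈ Finset.Icc 1 (N-1), (Xq N 0 k' + Jq N 0 k')^m ≤ (1/(12*(N:ℝ)))^m := by
    intro k' hk'
    have hne : ((0:ℕ):ZMod N) ≠ ((k':ℕ):ZMod N) := by
      rw [Nat.cast_zero]
      exact fun e => (mem_Icc_cast_ne hN2 hk') e.symm
    rw [Xq_off hN hne, Jq_zero_left hN (mem_Icc_cast_ne hN2 hk'), add_zero]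
    apply pow_le_of_abs_le'
    rw [abs_neg, abs_of_pos (by positivity)]
  have hk0 : ∀ k ∈ Finset.Icc 1 (N-1), (Xq N k 0 + Jq N k 0)^m ≤ (1/(12*(N:ℝ)))^m := by
    intro k hk
    have hne : ((k:ℕ):ZMod N) ≠ ((0:ℕ):ZMod N) := by
      rw [Nat.cast_zero]
      exact mem_Icc_cast_ne hN2 hk
    rw [Xq_off hN hne, Jq_comm, Jq_zero_left hN (mem_Icc_cast_ne hN2 hk), add_zero]
    apply pow_le_of_abs_le'
    rw [abs_neg, abs_of_pos (by positivity)]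
  have hg1 : ((if (1:ℕ) = 1 then (1/12:ℝ) else -(1/(12*(N:ℝ)))) + Jq N 1 1)^m ≤ (1/3:ℝ)^m := by
    rw [if_pos rfl]
    apply pow_le_of_abs_le'
    have hJ := abs_Jq_le hN2 1 1
    calc |1/12 + Jq N 1 1| ≤ |(1/12:ℝ)| + |Jq N 1 1| := abs_add_le _ _
      _ ≤ 1/12 + 1/4 := by
          apply add_le_add _ hJ
          rw [abs_of_pos]; norm_num
      _ = 1/3 := by norm_num
  have hgκ : ∀ κ ∈ Finset.Icc 1 (N-1), κ ≠ 1 →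
      ((if κ = 1 then (1/12:ℝ) else -(1/(12*(N:ℝ)))) + Jq N κ 1)^m
        ≤ |Jq N κ 1|^m + E := by
    intro κ hκ hκ1
    rw [if_neg hκ1]
    have h1 : (-(1/(12*(N:ℝ))) + Jq N κ 1)^m ≤ (|Jq N κ 1| + 1/(12*(N:ℝ)))^m := by
      apply pow_le_of_abs_le'
      calc |(-(1/(12*(N:ℝ))) + Jq N κ 1)| ≤ |(-(1/(12*(N:ℝ))))| + |Jq N κ 1| := abs_add_le _ _
        _ = |Jq N κ 1| + 1/(12*(N:ℝ)) := by
            rw [abs_neg, abs_of_pos (by positivity)]; ring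
    refine le_trans h1 ?_
    have hJ := abs_Jq_le hN2 κ 1
    have h12 : 1/(12*(N:ℝ)) ≤ 1/24 := by
      apply one_div_le_one_div_of_le (by norm_num)
      linarith
    have h2 := add_pow_le' (abs_nonneg (Jq N κ 1)) (show (0:ℝ) ≤ 1/(12*(N:ℝ)) by positivity)
      (show |Jq N κ 1| + 1/(12*(N:ℝ)) ≤ 7/24 by linarith) n
    rw [hn]
    exact h2
  -- inner sums
  have hinner : ∀ k ∈ Finset.Icc 1 (N-1), ∑ k' ∈ Finset.range N, (Xq N k k' + Jq N k k')^m
      ≤ (1/(12*(N:ℝ)))^m + ((1/3:ℝ)^m + (T + (N:ℝ) * E)) := by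
    intro k hk
    have h1mem : (1:ℕ) ∈ Finset.Icc 1 (N-1) := by
      simp only [Finset.mem_Icc]; omega
    rw [hsplit (fun k' => (Xq N k k' + Jq N k k')^m), inner_reindex hN m hk,
      ← Finset.add_sum_erase _
        (fun κ => ((if κ = 1 then (1/12:ℝ) else -(1/(12*(N:ℝ)))) + Jq N κ 1)^m) h1mem]
    refine add_le_add (hk0 k hk) (add_le_add hg1 ?_)
    have hrest : ∑ κ ∈ (Finset.Icc 1 (N-1)).erase 1,
        ((if κ = 1 then (1/12:ℝ) else -(1/(12*(N:ℝ)))) + Jq N κ 1)^m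
        ≤ (∑ κ ∈ (Finset.Icc 1 (N-1)).erase 1, |Jq N κ 1|^m)
          + (((Finset.Icc 1 (N-1)).erase 1).card : ℝ) * E := by
      calc ∑ κ ∈ (Finset.Icc 1 (N-1)).erase 1,
          ((if κ = 1 then (1/12:ℝ) else -(1/(12*(N:ℝ)))) + Jq N κ 1)^m
          ≤ ∑ κ ∈ (Finset.Icc 1 (N-1)).erase 1, (|Jq N κ 1|^m + E) :=
            Finset.sum_le_sum fun κ hκ =>
              hgκ κ (Finset.mem_of_mem_erase hκ) (Finset.ne_of_mem_erase hκ)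
        _ = _ := by rw [Finset.sum_add_distrib, Finset.sum_const, nsmul_eq_mul]
    refine le_trans hrest (add_le_add ?_ ?_)
    · rw [hT]
      exact Finset.sum_le_sum_of_subset_of_nonneg (Finset.erase_subset _ _)
        (fun i _ _ => by positivity)
    · apply mul_le_mul_of_nonneg_right _ hE0
      have hcard : (((Finset.Icc 1 (N-1)).erase 1).card : ℕ) ≤ N := by
        calc ((Finset.Icc 1 (N-1)).erase 1).card ≤ (Finset.Icc 1 (N-1)).card :=
              Finset.card_erase_le
          _ ≤ N := by rw [Nat.card_Icc]; omega
      exact_mod_cast hcard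
  -- total bound
  have hS : ∑ k ∈ Finset.range N, ∑ k' ∈ Finset.range N, (Xq N k k' + Jq N k k')^m
      ≤ (1/3:ℝ)^m + ((N:ℝ)-1) * (1/(12*(N:ℝ)))^m
        + ((N:ℝ)-1) * ((1/(12*(N:ℝ)))^m + ((1/3:ℝ)^m + (T + (N:ℝ) * E))) := by
    rw [hsplit (fun k => ∑ k' ∈ Finset.range N, (Xq N k k' + Jq N k k')^m),
      hsplit (fun k' => (Xq N 0 k' + Jq N 0 k')^m)]
    refine add_le_add (add_le_add (le_of_eq h00) ?_) ?_
    · calc ∑ k' ∈ Finset.Icc 1 (N-1), (Xq N 0 k' + Jq N 0 k')^m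
          ≤ ∑ k' ∈ Finset.Icc 1 (N-1), (1/(12*(N:ℝ)))^m := Finset.sum_le_sum h0k
        _ = ((N:ℝ)-1) * (1/(12*(N:ℝ)))^m := by
            rw [Finset.sum_const, Nat.card_Icc, Nat.add_sub_cancel, nsmul_eq_mul, hR]
    · calc ∑ k ∈ Finset.Icc 1 (N-1), ∑ k' ∈ Finset.range N, (Xq N k k' + Jq N k k')^m
          ≤ ∑ k ∈ Finset.Icc 1 (N-1),
              ((1/(12*(N:ℝ)))^m + ((1/3:ℝ)^m + (T + (N:ℝ) * E))) :=
            Finset.sum_le_sum hinner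
        _ = ((N:ℝ)-1) * ((1/(12*(N:ℝ)))^m + ((1/3:ℝ)^m + (T + (N:ℝ) * E))) := by
            rw [Finset.sum_const, Nat.card_Icc, Nat.add_sub_cancel, nsmul_eq_mul, hR]
  -- numeric comparisons
  have hkey := key_real n
  have hEb : ((N:ℝ)-1) * ((N:ℝ) * E) ≤ (N:ℝ) * (1/3:ℝ)^m := by
    have hE2 : ((N:ℝ)-1) * ((N:ℝ) * E) = ((N:ℝ)-1) * (((n:ℝ)+1)/12 * (7/24)^n) := by
      rw [hE]; field_simp
    have hE3 : ((n:ℝ)+1)/12 * (7/24)^n ≤ (1/3:ℝ)^(n+1) := by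
      rw [div_pow, div_pow, one_pow, div_mul_div_comm,
        div_le_div_iff₀ (by positivity) (by positivity)]
      have h24 : (24:ℝ)^n = 3^n*8^n := by rw [← mul_pow]; norm_num
      have h3 : (3:ℝ)^(n+1) = 3*3^n := by ring
      rw [h24, h3]
      nlinarith [mul_le_mul_of_nonneg_right hkey
        (pow_nonneg (show (0:ℝ) ≤ 3 by norm_num) n),
        pow_nonneg (show (0:ℝ) ≤ 8 by norm_num) n,
        pow_nonneg (show (0:ℝ) ≤ 3 by norm_num) n,
        pow_nonneg (show (0:ℝ) ≤ 7 by norm_num) n]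
    rw [hE2, hn]
    have h4 : ((N:ℝ)-1) * (((n:ℝ)+1)/12 * (7/24)^n) ≤ ((N:ℝ)-1) * (1/3:ℝ)^(n+1) :=
      mul_le_mul_of_nonneg_left hE3 (by linarith)
    have h5 : ((N:ℝ)-1) * (1/3:ℝ)^(n+1) ≤ (N:ℝ) * (1/3:ℝ)^(n+1) :=
      mul_le_mul_of_nonneg_right (by linarith) (by positivity)
    linarith
  have h12b : 2*((N:ℝ)-1) * (1/(12*(N:ℝ)))^m ≤ (N:ℝ) * (1/4:ℝ)^m := by
    rw [hn]
    have e1 : (1/(12*(N:ℝ))) ≤ 1/4 := by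
      apply one_div_le_one_div_of_le (by norm_num)
      linarith
    have e2 : (1/(12*(N:ℝ)))^n ≤ (1/4:ℝ)^n := pow_le_pow_left₀ (by positivity) e1 n
    have e3 : 2*((N:ℝ)-1) * (1/(12*(N:ℝ)))^(n+1)
        = (2*((N:ℝ)-1) * (1/(12*(N:ℝ)))) * (1/(12*(N:ℝ)))^n := by ring
    have e4 : 2*((N:ℝ)-1) * (1/(12*(N:ℝ))) ≤ (N:ℝ)/4 := by
      rw [mul_one_div, div_le_div_iff₀ (by positivity) (by norm_num)]
      nlinarith
    have e5 : (2*((N:ℝ)-1) * (1/(12*(N:ℝ)))) * (1/(12*(N:ℝ)))^n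
        ≤ ((N:ℝ)/4) * (1/4:ℝ)^n := by
      apply mul_le_mul e4 e2 (by positivity) (by positivity)
    rw [e3]
    calc (2*((N:ℝ)-1) * (1/(12*(N:ℝ)))) * (1/(12*(N:ℝ)))^n ≤ ((N:ℝ)/4) * (1/4:ℝ)^n := e5
      _ = (N:ℝ) * (1/4:ℝ)^(n+1) := by ring
  have hTb : ((N:ℝ)-1) * T ≤ (N:ℝ) * T := mul_le_mul_of_nonneg_right (by linarith) hT0
  have hfinal : ∑ k ∈ Finset.range N, ∑ k' ∈ Finset.range N, (Xq N k k' + Jq N k k')^m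
      ≤ (N:ℝ) * (2/(3:ℝ)^m + 1/(4:ℝ)^m) + (N:ℝ) * T := by
    have h3m : ((1/3:ℝ))^m = 1/(3:ℝ)^m := one_div_pow 3 m
    have h4m : ((1/4:ℝ))^m = 1/(4:ℝ)^m := one_div_pow 4 m
    have expand : ((N:ℝ)-1) * ((1/(12*(N:ℝ)))^m + ((1/3:ℝ)^m + (T + (N:ℝ) * E)))
        = ((N:ℝ)-1) * (1/(12*(N:ℝ)))^m + ((N:ℝ)-1) * (1/3:ℝ)^m + ((N:ℝ)-1) * T
          + ((N:ℝ)-1) * ((N:ℝ) * E) := by ring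
    have hS' := hS
    rw [expand] at hS'
    have hgoal : (N:ℝ) * (2/(3:ℝ)^m + 1/(4:ℝ)^m) + (N:ℝ) * T
        = (N:ℝ) * (2*(1/3:ℝ)^m + (1/4:ℝ)^m) + (N:ℝ) * T := by
      rw [h3m, h4m]; ring
    rw [hgoal]
    linarith [hS', hEb, h12b, hTb]
  -- conclude
  have hfin2 : (1 / (N : ℝ) ^ 2) *
      ∑ k ∈ Finset.range N, ∑ k' ∈ Finset.range N, (Xq N k k' + Jq N k k')^m
      ≤ (1 / (N : ℝ) ^ 2) * ((N:ℝ) * (2/(3:ℝ)^m + 1/(4:ℝ)^m) + (N:ℝ) * T) :=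
    mul_le_mul_of_nonneg_left hfinal (by positivity)
  have heq : (1 / (N : ℝ) ^ 2) * ((N:ℝ) * (2/(3:ℝ)^m + 1/(4:ℝ)^m) + (N:ℝ) * T)
      = (2/(3:ℝ)^m + 1/(4:ℝ)^m)/N + (1/(N:ℝ)) * T := by
    field_simp
  rw [heq] at hfin2
  exact hfin2
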